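/- For every n ∈ ℕ, every t ∈ [0,1], and every θ ∈ ℝ with 0 < |θ| ≤ nπ, one has |(1/n)·∑_{j=1}^{⌊nt⌋} e^{i j θ/n}| ≤ π · min{ t , 1/|θ| }. -/

import Mathlib

lemma abs_exp_I_mul_sub_one (x : ℝ) :
    ‖Complex.exp (Complex.I * x) - 1‖ = 2 * |Real.sin (x / 2)| := by
  rw [mul_comm, Complex.norm_def, Complex.normSq_apply]
  simp only [Complex.sub_re, Complex.sub_im, Complex.exp_ofReal_mul_I_re,
    Complex.exp_ofReal_mul_I_im, Complex.one_re, Complex.one_im, sub_zero]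
  have h : (Real.cos x - 1) ^ 2 + (Real.sin x) ^ 2 = 4 * ((1 - Real.cos x) / 2) := by
    nlinarith [Real.sin_sq_add_cos_sq x]
  rw [show (Real.cos x - 1) * (Real.cos x - 1) + Real.sin x * Real.sin x
      = (Real.cos x - 1) ^ 2 + (Real.sin x) ^ 2 by ring, h, Real.abs_sin_half,
    Real.sqrt_mul (by norm_num : (0:ℝ) ≤ 4), show (4:ℝ) = 2^2 by norm_num,
    Real.sqrt_sq (by norm_num : (0:ℝ) ≤ 2)]

/-- For every `n ∈ ℕ`, `t ∈ [0,1]` and `θ` with `0 < |θ| ≤ nπ`,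
`|(1/n) ∑_{j=1}^{⌊nt⌋} e^{i j θ/n}| ≤ π · min{t, 1/|θ|}`. -/
theorem stmt_1 (n : ℕ) (t : ℝ) (ht : t ∈ Set.Icc (0:ℝ) 1) (θ : ℝ)
    (hθ : 0 < |θ|) (hθn : |θ| ≤ (n : ℝ) * Real.pi) :
    ‖(1 / (n : ℂ)) * ∑ j ∈ Finset.Icc 1 ⌊(n : ℝ) * t⌋₊,
        Complex.exp (Complex.I * (j : ℂ) * ((θ / n : ℝ) : ℂ))‖
      ≤ Real.pi * min t (1 / |θ|) := by
  obtain ⟨ht0, ht1⟩ := ht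
  have hπ := Real.pi_pos
  have hn : 0 < n := by
    rcases Nat.eq_zero_or_pos n with h | h
    · subst h; simp at hθn; rw [hθn] at hθ; simp at hθ
    · exact h
  have hnR : (0:ℝ) < n := by exact_mod_cast hn
  set m := ⌊(n : ℝ) * t⌋₊ with hm
  set φ := θ / n with hφdef
  have hφabs : |φ| = |θ| / n := by
    rw [hφdef, abs_div, abs_of_pos hnR]
  have hφ0 : 0 < |φ| := by rw [hφabs]; positivity
  have hφπ : |φ| ≤ Real.pi := by
    rw [hφabs, div_le_iff₀ hnR]; linarith [hθn]
  set z := Complex.exp (Complex.I * (φ : ℂ)) with hz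
  have hterm : ∀ j : ℕ, Complex.exp (Complex.I * (j : ℂ) * ((φ : ℝ) : ℂ)) = z ^ j := by
    intro j
    rw [hz, ← Complex.exp_nat_mul]
    ring_nf
  have habsz : ‖z‖ = 1 := by
    rw [hz, mul_comm]; exact Complex.norm_exp_ofReal_mul_I φ
  have hsum : ‖(1 / (n : ℂ)) * ∑ j ∈ Finset.Icc 1 m,
      Complex.exp (Complex.I * (j : ℂ) * ((φ : ℝ) : ℂ))‖
      = (1 / n) * ‖∑ j ∈ Finset.Icc 1 m, z ^ j‖ := by
    rw [norm_mul]
    congr 1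
    · simp
    · congr 1; exact Finset.sum_congr rfl fun j _ => hterm j
  rw [hsum]
  -- Bound 1: ≤ π * t
  have hb1 : (1 / (n:ℝ)) * ‖∑ j ∈ Finset.Icc 1 m, z ^ j‖ ≤ Real.pi * t := by
    have h1 : ‖∑ j ∈ Finset.Icc 1 m, z ^ j‖ ≤ (m : ℝ) := by
      calc ‖∑ j ∈ Finset.Icc 1 m, z ^ j‖
          ≤ ∑ j ∈ Finset.Icc 1 m, ‖z ^ j‖ := by
            exact norm_sum_le (Finset.Icc 1 m) (fun j => z ^ j)
        _ = ∑ j ∈ Finset.Icc 1 m, (1:ℝ) := by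
            refine Finset.sum_congr rfl fun j _ => ?_
            rw [norm_pow, habsz, one_pow]
        _ = (Finset.Icc 1 m).card := by simp
        _ = (m : ℝ) := by simp
    have h2 : (m : ℝ) ≤ n * t := Nat.floor_le (by positivity)
    calc (1 / (n:ℝ)) * ‖∑ j ∈ Finset.Icc 1 m, z ^ j‖
        ≤ (1 / (n:ℝ)) * ((n:ℝ) * t) := by
          apply mul_le_mul_of_nonneg_left (h1.trans h2) (by positivity)
      _ = t := by field_simp
      _ ≤ Real.pi * t := by nlinarith [Real.pi_gt_three]
  -- Bound 2: ≤ π / |θ|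
  have hzabs : ‖z - 1‖ = 2 * |Real.sin (φ / 2)| := abs_exp_I_mul_sub_one φ
  have hsinpos : 0 < |Real.sin (φ / 2)| := by
    have h1 : |φ| / Real.pi ≤ |Real.sin (φ / 2)| := by
      have := Real.mul_le_sin (x := |φ| / 2) (by positivity) (by linarith)
      calc |φ| / Real.pi = 2 / Real.pi * (|φ| / 2) := by field_simp
        _ ≤ Real.sin (|φ| / 2) := this
        _ = |Real.sin (|φ| / 2)| := (abs_of_nonneg (Real.sin_nonneg_of_nonneg_of_le_pi
            (by positivity) (by linarith))).symm
        _ = |Real.sin (φ / 2)| := by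
            rcases abs_cases φ with ⟨h, _⟩ | ⟨h, _⟩
            · rw [h]
            · rw [h]; rw [show -φ / 2 = -(φ/2) by ring, Real.sin_neg, abs_neg]
    linarith [div_pos hφ0 hπ]
  have hsinlb : |φ| / Real.pi ≤ |Real.sin (φ / 2)| := by
    have := Real.mul_le_sin (x := |φ| / 2) (by positivity) (by linarith)
    calc |φ| / Real.pi = 2 / Real.pi * (|φ| / 2) := by field_simp
      _ ≤ Real.sin (|φ| / 2) := this
      _ = |Real.sin (|φ| / 2)| := (abs_of_nonneg (Real.sin_nonneg_of_nonneg_of_le_pi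
          (by positivity) (by linarith))).symm
      _ = |Real.sin (φ / 2)| := by
          rcases abs_cases φ with ⟨h, _⟩ | ⟨h, _⟩
          · rw [h]
          · rw [h]; rw [show -φ / 2 = -(φ/2) by ring, Real.sin_neg, abs_neg]
  have hzne : z ≠ 1 := by
    intro h
    rw [h] at hzabs
    simp at hzabs
    rw [hzabs] at hsinpos
    simp at hsinpos
  have hb2 : (1 / (n:ℝ)) * ‖∑ j ∈ Finset.Icc 1 m, z ^ j‖
      ≤ Real.pi * (1 / |θ|) := by
    have hgeom : ∑ j ∈ Finset.Icc 1 m, z ^ j = z * ((z ^ m - 1) / (z - 1)) := by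
      rw [← geom_sum_eq hzne m, Finset.mul_sum]
      rw [← Finset.Ico_add_one_right_eq_Icc, Finset.sum_Ico_eq_sum_range]
      simp only [Nat.add_sub_cancel_left, Nat.succ_sub_one, Nat.add_sub_cancel]
      refine Finset.sum_congr rfl fun j _ => ?_
      rw [add_comm, pow_succ, mul_comm]
    have habs : ‖∑ j ∈ Finset.Icc 1 m, z ^ j‖ ≤ 2 / ‖z - 1‖ := by
      rw [hgeom, norm_mul, habsz, one_mul, norm_div]
      apply div_le_div_of_nonneg_right ?_ ?_ |>.trans_eq rfl
      · calc ‖z ^ m - 1‖ ≤ ‖z ^ m‖ + ‖(1:ℂ)‖ := by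
              exact norm_sub_le (z ^ m) (1 : ℂ)
          _ = 2 := by rw [norm_pow, habsz, one_pow, norm_one]; norm_num
      · rw [hzabs]; linarith
    have habs2 : 2 / ‖z - 1‖ ≤ Real.pi / |φ| := by
      rw [hzabs]
      rw [div_le_div_iff₀ (by linarith) hφ0]
      have : |φ| / Real.pi * Real.pi ≤ |Real.sin (φ/2)| * Real.pi :=
        mul_le_mul_of_nonneg_right hsinlb hπ.le
      rw [div_mul_cancel₀ _ hπ.ne'] at this
      nlinarith
    calc (1 / (n:ℝ)) * ‖∑ j ∈ Finset.Icc 1 m, z ^ j‖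
        ≤ (1 / (n:ℝ)) * (Real.pi / |φ|) := by
          exact mul_le_mul_of_nonneg_left (habs.trans habs2) (by positivity)
      _ = Real.pi * (1 / |θ|) := by
          rw [hφabs]; field_simp
  rw [mul_min_of_nonneg _ _ hπ.le]
  exact le_min hb1 hb2
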